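/- In the setting of the previous statement (Ψ positive nondecreasing on [x₀,∞), Q(u) = ∫_{x₀}^u Ψ/Σ, φ(u) = ∫_u^∞ e^{−Q}/Σ, Q(∞)=∞, φ(x₀)<∞), one has the identity (e^{Q(u)}φ(u))' = (Ψ(u)e^{Q(u)}φ(u) − 1)/Σ(u) ≤ 0, and consequently ∫_{x₀}^x φ(u)e^{Q(u)} du ≤ ∫_{x₀}^x du/Ψ(u) for every x ≥ x₀. In particular if ∫_{x₀}^∞ du/Ψ(u) < ∞ (Grey's condition) then ∫_{x₀}^∞ φ(u)e^{Q(u)} du < ∞. -/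

import Mathlib

open Set MeasureTheory Filter Topology

/-- `Q(u) := ∫_{x₀}^u Ψ/Σ` -/
noncomputable def Qf (Sig Psi : ℝ → ℝ) (x₀ u : ℝ) : ℝ := ∫ v in x₀..u, Psi v / Sig v

/-- `φ(u) := ∫_u^∞ (1/Σ(x)) e^{−Q(x)} dx` -/
noncomputable def phif (Sig Psi : ℝ → ℝ) (x₀ u : ℝ) : ℝ :=
  ∫ x in Set.Ioi u, (1 / Sig x) * Real.exp (-(Qf Sig Psi x₀ x))

/-- continuity of a primitive on `Ici x₀` -/
lemma prim_contOn {f : ℝ → ℝ} {x₀ : ℝ}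
    (hf : ∀ b ≥ x₀, IntervalIntegrable f volume x₀ b) :
    ContinuousOn (fun y => ∫ v in x₀..y, f v) (Ici x₀) := by
  intro y hy
  have hy' : x₀ ≤ y := hy
  have hcw : ContinuousWithinAt (fun y => ∫ v in x₀..y, f v) (Icc x₀ (y + 1)) y := by
    apply intervalIntegral.continuousWithinAt_primitive (by simp)
    rw [min_self, max_eq_right (by linarith : x₀ ≤ y + 1)]
    exact hf _ (by linarith)
  exact hcw.mono_of_mem_nhdsWithin (Filter.mem_of_superset
    (inter_mem_nhdsWithin _ (Iio_mem_nhds (by linarith : y < y + 1)))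
    (fun z hz => ⟨hz.1, hz.2.le⟩))

theorem stmt7 (Sig Psi : ℝ → ℝ) (x₀ : ℝ)
    (hScont : ContinuousOn Sig (Ici x₀)) (hPcont : ContinuousOn Psi (Ici x₀))
    (hSpos : ∀ x ≥ x₀, 0 < Sig x) (hPpos : ∀ x ≥ x₀, 0 < Psi x)
    (hPmono : MonotoneOn Psi (Ici x₀))
    (hQ : Tendsto (fun u => Qf Sig Psi x₀ u) atTop atTop)
    (hφ : IntegrableOn (fun x => (1 / Sig x) * Real.exp (-(Qf Sig Psi x₀ x))) (Ioi x₀)) :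
    (∀ u ∈ Ioi x₀,
      HasDerivAt (fun y => Real.exp (Qf Sig Psi x₀ y) * phif Sig Psi x₀ y)
        ((Psi u * Real.exp (Qf Sig Psi x₀ u) * phif Sig Psi x₀ u - 1) / Sig u) u) ∧
    (∀ u ≥ x₀,
      (Psi u * Real.exp (Qf Sig Psi x₀ u) * phif Sig Psi x₀ u - 1) / Sig u ≤ 0) ∧
    (∀ x ≥ x₀,
      (∫ u in x₀..x, phif Sig Psi x₀ u * Real.exp (Qf Sig Psi x₀ u))
        ≤ ∫ u in x₀..x, 1 / Psi u) ∧
    (IntegrableOn (fun u => 1 / Psi u) (Ioi x₀) →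
      IntegrableOn (fun u => phif Sig Psi x₀ u * Real.exp (Qf Sig Psi x₀ u)) (Ioi x₀)) := by
  set Q : ℝ → ℝ := fun u => Qf Sig Psi x₀ u with hQdef
  set φ : ℝ → ℝ := fun u => phif Sig Psi x₀ u with hφdef
  set f : ℝ → ℝ := fun v => Psi v / Sig v with hfdef
  set h : ℝ → ℝ := fun x => (1 / Sig x) * Real.exp (-(Q x)) with hhdef
  have hφ' : IntegrableOn h (Ioi x₀) := hφ
  have hfcont : ContinuousOn f (Ici x₀) :=
    hPcont.div hScont (fun x hx => (hSpos x hx).ne')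
  have hfii : ∀ b ≥ x₀, IntervalIntegrable f volume x₀ b := by
    intro b hb
    apply (hfcont.mono ?_).intervalIntegrable
    rw [uIcc_of_le hb]; exact Icc_subset_Ici_self
  have hQcont : ContinuousOn Q (Ici x₀) := prim_contOn hfii
  have hQderiv : ∀ u ∈ Ioi x₀, HasDerivAt Q (f u) u := by
    intro u hu
    exact intervalIntegral.integral_hasDerivAt_right (hfii u (le_of_lt hu))
      ⟨Ici x₀, Ici_mem_nhds hu, hfcont.aestronglyMeasurable measurableSet_Ici⟩
      (hfcont.continuousAt (Ici_mem_nhds hu))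
  have hhii : ∀ b ≥ x₀, IntervalIntegrable h volume x₀ b := by
    intro b hb
    rw [intervalIntegrable_iff_integrableOn_Ioc_of_le hb]
    exact hφ'.mono_set Ioc_subset_Ioi_self
  have hφrep : ∀ y ≥ x₀, φ y = φ x₀ - ∫ v in x₀..y, h v := by
    intro y hy
    have hsplit : ∫ x in Ioi x₀, h x = (∫ x in Ioc x₀ y, h x) + ∫ x in Ioi y, h x := by
      rw [← setIntegral_union (Ioc_disjoint_Ioi le_rfl) measurableSet_Ioi
        (hφ'.mono_set Ioc_subset_Ioi_self) (hφ'.mono_set (Ioi_subset_Ioi hy)),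
        Ioc_union_Ioi_eq_Ioi hy]
    have h1 : φ y = ∫ x in Ioi y, h x := rfl
    have h2 : φ x₀ = ∫ x in Ioi x₀, h x := rfl
    rw [intervalIntegral.integral_of_le hy, h1, h2]
    linarith [hsplit]
  have hφcont : ContinuousOn φ (Ici x₀) :=
    (continuousOn_const.sub (prim_contOn hhii)).congr (fun y hy => hφrep y hy)
  have hφnonneg : ∀ u ≥ x₀, 0 ≤ φ u := by
    intro u hu
    apply setIntegral_nonneg measurableSet_Ioi
    intro x hx
    have hx' : x₀ ≤ x := hu.trans hx.out.le
    have hpos := hSpos x hx'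
    exact mul_nonneg (by positivity) (Real.exp_nonneg _)
  have keyA : ∀ u ≥ x₀, Psi u * φ u ≤ Real.exp (-(Q u)) := by
    intro u hu
    have hg : ∀ x ∈ Ioi u, HasDerivAt (fun y => -Real.exp (-(Q y)))
        (Real.exp (-(Q x)) * f x) x := by
      intro x hx
      have hx' : x ∈ Ioi x₀ := lt_of_le_of_lt hu hx
      have h1 := ((hQderiv x hx').neg).exp.neg
      exact h1.congr_deriv (by rw [Pi.neg_apply]; ring)
    have hgcont : ContinuousWithinAt (fun y => -Real.exp (-(Q y))) (Ici u) u := by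
      have h1 := ((hQcont u hu).mono (Ici_subset_Ici.mpr hu)).neg
      exact h1.rexp.neg
    have hgnonneg : ∀ x ∈ Ioi u, 0 ≤ Real.exp (-(Q x)) * f x := by
      intro x hx
      have hx' : x₀ ≤ x := hu.trans hx.out.le
      exact mul_nonneg (Real.exp_nonneg _) (div_pos (hPpos x hx') (hSpos x hx')).le
    have hgtend : Tendsto (fun y => -Real.exp (-(Q y))) atTop (𝓝 0) := by
      have h1 : Tendsto (fun y => -(Q y)) atTop atBot := tendsto_neg_atTop_atBot.comp hQ
      have h2 := (Real.tendsto_exp_atBot.comp h1).neg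
      simpa using h2
    have hint := integrableOn_Ioi_deriv_of_nonneg hgcont hg hgnonneg hgtend
    have heq := integral_Ioi_of_hasDerivAt_of_nonneg hgcont hg hgnonneg hgtend
    simp only [zero_sub, neg_neg] at heq
    have hmono : ∫ x in Ioi u, Psi u * h x ≤ ∫ x in Ioi u, Real.exp (-(Q x)) * f x := by
      apply setIntegral_mono_on ((hφ'.mono_set (Ioi_subset_Ioi hu)).const_mul _) hint
        measurableSet_Ioi
      intro x hx
      have hx' : x₀ ≤ x := hu.trans hx.out.le
      have hP : Psi u ≤ Psi x := hPmono hu hx' (le_of_lt hx)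
      have hpos := hSpos x hx'
      have hh0 : 0 ≤ h x := mul_nonneg (by positivity) (Real.exp_nonneg _)
      calc Psi u * h x ≤ Psi x * h x := mul_le_mul_of_nonneg_right hP hh0
        _ = Real.exp (-(Q x)) * f x := by
            simp only [hhdef, hfdef]; ring
    have hPu : Psi u * φ u = ∫ x in Ioi u, Psi u * h x := by
      rw [MeasureTheory.integral_const_mul]; rfl
    rw [hPu]
    calc (∫ x in Ioi u, Psi u * h x) ≤ ∫ x in Ioi u, Real.exp (-(Q x)) * f x := hmono
      _ = Real.exp (-(Q u)) := heq
  have key1 : ∀ u ≥ x₀, Psi u * Real.exp (Q u) * φ u ≤ 1 := by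
    intro u hu
    have h1 := keyA u hu
    have h2 : Real.exp (Q u) * (Psi u * φ u) ≤ Real.exp (Q u) * Real.exp (-(Q u)) :=
      mul_le_mul_of_nonneg_left h1 (Real.exp_nonneg _)
    rw [← Real.exp_add] at h2
    simp only [add_neg_cancel, Real.exp_zero] at h2
    nlinarith [h2]
  refine ⟨?_, ?_, ?_, ?_⟩
  · -- derivative identity
    intro u hu
    have hu' : x₀ ≤ u := le_of_lt hu
    have hQd := hQderiv u hu
    have hhca : ContinuousAt h u := by
      have h1 : ContinuousAt Sig u := hScont.continuousAt (Ici_mem_nhds hu)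
      have h2 : ContinuousAt Q u := hQd.continuousAt
      exact (continuousAt_const.div h1 (hSpos u hu').ne').mul
        (Real.continuous_exp.continuousAt.comp h2.neg)
    have hφd : HasDerivAt φ (-(h u)) u := by
      have hF : HasDerivAt (fun y => ∫ v in x₀..y, h v) (h u) u :=
        intervalIntegral.integral_hasDerivAt_right (hhii u hu')
          ⟨Ioi x₀, Ioi_mem_nhds hu, hφ'.aestronglyMeasurable⟩ hhca
      have hF2 := hF.const_sub (φ x₀)
      apply hF2.congr_of_eventuallyEq
      filter_upwards [Ioi_mem_nhds hu] with y hy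
      exact hφrep y hy.le
    have hEd : HasDerivAt (fun y => Real.exp (Q y)) (Real.exp (Q u) * f u) u := hQd.exp
    have hprod := hEd.mul hφd
    refine hprod.congr_deriv ?_
    have hS : Sig u ≠ 0 := (hSpos u hu').ne'
    have hEneg : Real.exp (-(Q u)) = (Real.exp (Q u))⁻¹ := Real.exp_neg _
    simp only [hhdef, hfdef, hEneg]
    field_simp
    ring
  · -- nonpositivity
    intro u hu
    have h1 := key1 u hu
    exact div_nonpos_of_nonpos_of_nonneg (by linarith) (hSpos u hu).le
  · -- integral comparison
    intro x hx
    have hcont1 : ContinuousOn (fun u => φ u * Real.exp (Q u)) (Ici x₀) :=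
      hφcont.mul (Real.continuous_exp.comp_continuousOn hQcont)
    apply intervalIntegral.integral_mono_on hx
    · exact (hcont1.mono (by rw [uIcc_of_le hx]; exact Icc_subset_Ici_self)).intervalIntegrable
    · apply ContinuousOn.intervalIntegrable
      apply (continuousOn_const.div hPcont (fun y hy => (hPpos y hy).ne')).mono
      rw [uIcc_of_le hx]; exact Icc_subset_Ici_self
    · intro u hu
      rw [le_div_iff₀ (hPpos u hu.1)]
      nlinarith [key1 u hu.1]
  · -- integrability consequence
    intro hΨint
    have hsm : AEStronglyMeasurable (fun u => φ u * Real.exp (Q u))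
        (volume.restrict (Ioi x₀)) :=
      ((hφcont.mul (Real.continuous_exp.comp_continuousOn hQcont)).mono
        Ioi_subset_Ici_self).aestronglyMeasurable measurableSet_Ioi
    apply Integrable.mono' hΨint hsm
    rw [ae_restrict_iff' measurableSet_Ioi]
    filter_upwards with u hu
    have hu' : x₀ ≤ u := hu.out.le
    rw [Real.norm_eq_abs,
      abs_of_nonneg (mul_nonneg (hφnonneg u hu') (Real.exp_nonneg _))]
    rw [le_div_iff₀ (hPpos u hu')]
    nlinarith [key1 u hu']
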